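/- arXiv:2401.15887 — 2 statements merged into one kernel-verified Lean document; each statement's English description precedes it below -/
import Mathlib

section
/- Let L = Σ_{i=0}^J a_i(n)σ^i be a nonzero operator with polynomial coefficients over a field K of characteristic 0. Then the continued zero index of L satisfies C_L ≤ J; that is, there exists c with 0 ≤ c ≤ J such that L*(n^c) ≠ 0, and the least such c is at most J. -/
open Polynomial Finset

/-- The polynomials `b_k(n) = ∑_{j=k}^J binom(j,k) a_{J-j}(n+j-J)` attached to the
operator `L = ∑_{i=0}^J a_i(n) σ^i`. -/
noncomputable def bPoly {K : Type*} [Field K] (J : ℕ) (a : ℕ → K[X]) (k : ℕ) : K[X] :=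
  ∑ j ∈ Finset.Icc k J, (j.choose k : K) • (a (J - j)).comp (X + C ((j : K) - (J : K)))

/-- The degree of the operator `L = ∑_{i=0}^J a_i(n) σ^i`:
`deg L = max_{0 ≤ k ≤ J} (deg b_k(n) - k)`, an element of `WithBot ℤ`
(the zero polynomial having degree `⊥ = -∞`). -/
noncomputable def opDegree {K : Type*} [Field K] (J : ℕ) (a : ℕ → K[X]) : WithBot ℤ :=
  (Finset.range (J + 1)).sup fun k =>
    WithBot.map (fun d : ℕ => (d : ℤ) - (k : ℤ)) (bPoly J a k).degree

/-- The adjoint `L*` applied to a polynomial `x`: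
`L*(x)(n) = ∑_{i=0}^J a_i(n-i) x(n-i)`. -/
noncomputable def adjointApply {K : Type*} [Field K] (J : ℕ) (a : ℕ → K[X]) (x : K[X]) : K[X] :=
  ∑ i ∈ Finset.range (J + 1), ((a i).comp (X - C (i : K))) * (x.comp (X - C (i : K)))

/-- The continued zero index `C_L`: the least `c ∈ ℕ` with `L*(n^c) ≠ 0`. -/
noncomputable def contZeroIndex {K : Type*} [Field K] (J : ℕ) (a : ℕ → K[X]) : ℕ :=
  sInf {c : ℕ | adjointApply J a (X ^ c) ≠ 0}

/-- The operator `L = ∑_{i=0}^J a_i(n) σ^i` annihilates the sequence `F` if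
`∑_{i=0}^J a_i(n) F(n+i) = 0` for all `n ∈ ℕ`. -/
def Annihilates {K : Type*} [Field K] (J : ℕ) (a : ℕ → K[X]) (F : ℕ → K) : Prop :=
  ∀ n : ℕ, ∑ i ∈ Finset.range (J + 1), (a i).eval (n : K) * F (n + i) = 0

/-- `F` is holonomic: it admits a nonzero annihilating operator. -/
def Holonomic {K : Type*} [Field K] (F : ℕ → K) : Prop :=
  ∃ (J : ℕ) (a : ℕ → K[X]), (∃ i ≤ J, a i ≠ 0) ∧ Annihilates J a F

/-- `F` has order `J`: `J` is the minimal order of a nonzero annihilator of `F`. -/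
def HasOrder {K : Type*} [Field K] (F : ℕ → K) (J : ℕ) : Prop :=
  (∃ a : ℕ → K[X], (∃ i ≤ J, a i ≠ 0) ∧ Annihilates J a F) ∧
    ∀ J' < J, ∀ a : ℕ → K[X], (∃ i ≤ J', a i ≠ 0) → ¬ Annihilates J' a F

/-- `(num(n)/den(n))·F(n)` is summable: there are rational functions
`u_i = u i / v i`, `0 ≤ i ≤ J-1`, such that
`num(n)/den(n) · F(n) = ∑_i u_i(n+1) F(n+1+i) - ∑_i u_i(n) F(n+i)`
for all `n` at which all rational functions involved are defined. -/
def IsSummableRat {K : Type*} [Field K] (J : ℕ) (F : ℕ → K) (num den : K[X]) : Prop :=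
  ∃ u v : ℕ → K[X], (∀ i < J, v i ≠ 0) ∧ ∀ n : ℕ,
    den.eval (n : K) ≠ 0 →
    (∀ i < J, (v i).eval (n : K) ≠ 0 ∧ (v i).eval ((n : K) + 1) ≠ 0) →
    num.eval (n : K) / den.eval (n : K) * F n =
      (∑ i ∈ Finset.range J,
          (u i).eval ((n : K) + 1) / (v i).eval ((n : K) + 1) * F (n + 1 + i)) -
        ∑ i ∈ Finset.range J, (u i).eval (n : K) / (v i).eval (n : K) * F (n + i)

/-- The coefficient of `n^m` in a polynomial, for an integer index `m`
(zero for negative `m`). -/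
noncomputable def coeffZ {K : Type*} [Field K] (b : K[X]) (m : ℤ) : K :=
  if 0 ≤ m then b.coeff m.toNat else 0

/-- The value `f(s) = ∑_{k=0}^J [n^{d+k}](b_k(n)) · s(s-1)⋯(s-k+1)`, where `d = deg L`. -/
noncomputable def fVal {K : Type*} [Field K] (J : ℕ) (a : ℕ → K[X]) (s : ℕ) : K :=
  ∑ k ∈ Finset.range (J + 1),
    coeffZ (bPoly J a k) (WithBot.unbotD 0 (opDegree J a) + (k : ℤ)) *
      ∏ j ∈ Finset.range k, ((s : K) - (j : K))

/-- `L` is nondegenerated if `f(s)` has no root in `ℕ`. -/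
def Nondegenerated {K : Type*} [Field K] (J : ℕ) (a : ℕ → K[X]) : Prop :=
  ∀ s : ℕ, fVal J a s ≠ 0

/-- `d_L = max_{0 ≤ i ≤ J} deg a_i(n)`. -/
noncomputable def dLdeg {K : Type*} [Field K] (J : ℕ) (a : ℕ → K[X]) : ℕ :=
  (Finset.range (J + 1)).sup fun i => (a i).natDegree

/-- For a nonzero operator `L = ∑_{i=0}^J a_i(n) σ^i`, the continued zero
index satisfies `C_L ≤ J`: there is some `c ≤ J` with `L*(n^c) ≠ 0`, and the least such `c`
is at most `J`. -/
theorem contZeroIndex_le_order {K : Type*} [Field K] [CharZero K]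
    (J : ℕ) (a : ℕ → K[X]) (hL : ∃ i ≤ J, a i ≠ 0) :
    (∃ c ≤ J, adjointApply J a (X ^ c) ≠ 0) ∧ contZeroIndex J a ≤ J := by
  have key : ∃ c ≤ J, adjointApply J a (X ^ c) ≠ 0 := by
    by_contra h
    push_neg at h
    obtain ⟨i0, hi0, ha0⟩ := hL
    apply ha0
    apply Polynomial.funext
    intro t
    -- For each s : K, the vector v i = (a i).eval (s - i) vanishes.
    have main : ∀ s : K, ∀ i : Fin (J + 1), (a (i : ℕ)).eval (s - (i : ℕ)) = 0 := by
      intro s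
      have hinj : Function.Injective (fun i : Fin (J + 1) => s - ((i : ℕ) : K)) := by
        intro i j hij
        simp only [sub_right_inj, Nat.cast_inj] at hij
        exact Fin.ext hij
      have := Matrix.eq_zero_of_forall_pow_sum_mul_pow_eq_zero hinj
        (f := fun i : Fin (J + 1) => s - ((i : ℕ) : K))
        (v := fun i : Fin (J + 1) => (a (i : ℕ)).eval (s - ((i : ℕ) : K)))
        ?_
      · intro i
        exact congrFun this i
      · intro c
        have hc : adjointApply J a (X ^ (c : ℕ)) = 0 := h c (Nat.lt_succ_iff.mp c.isLt)
        have := congrArg (Polynomial.eval s) hc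
        unfold adjointApply at this
        simp only [eval_finset_sum, eval_mul, eval_comp, eval_sub, eval_X, eval_C, eval_pow,
          eval_zero] at this
        rw [Fin.sum_univ_eq_sum_range
          (fun i => (a i).eval (s - (i : K)) * (s - (i : K)) ^ (c : ℕ))] at *
        exact this
    -- Apply at s = t + i0, i = i0.
    have := main (t + (i0 : K)) ⟨i0, Nat.lt_succ_iff.mpr hi0⟩
    simpa using this
  refine ⟨key, ?_⟩
  obtain ⟨c, hc, hne⟩ := key
  exact le_trans (Nat.sInf_le hne) hc
end

section
/- Let F : ℕ → K be a holonomic sequence of order J > 0 over a field K of characteristic 0 and let L = Σ_{i=0}^J a_i(n)σ^i be an annihilator of F of order J with a_0(n)a_J(n) ≠ 0. Let a(n), b(n) ∈ K[n] with gcd(a(n), b(n)) = 1 be such that (a(n)/b(n))·F(n) is summable. Suppose that for every h ∈ ℕ one has gcd(a_0(n), a_J(n+h)) = 1, gcd(b(n), b(n+J+h)) = 1, gcd(a_0(n), b(n+J+h)) = 1 and gcd(b(n), a_J(n+h)) = 1. Then b(n) divides a(n) in K[n] (so b(n) is a nonzero constant). -/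
open Polynomial Finset

set_option linter.unusedSectionVars false
set_option linter.unusedVariables false
set_option maxHeartbeats 2000000

namespace DDNaux

variable {K : Type*} [Field K] [CharZero K]

noncomputable def sh (c : ℤ) (f : K[X]) : K[X] := f.comp (X + C (c : K))

lemma sh_C_eq (c : ℤ) (f : K[X]) : sh c f = (algEquivAevalXAddC ((c : ℤ) : K)) f := by
  simp [sh, algEquivAevalXAddC, algEquivOfCompEqX, ← comp_eq_aeval]

lemma sh_comp (c d : ℤ) (f : K[X]) : sh c (sh d f) = sh (c + d) f := by
  simp only [sh, comp_assoc]
  norm_num [add_comm, add_assoc, add_left_comm]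

lemma sh_mul (c : ℤ) (f g : K[X]) : sh c (f * g) = sh c f * sh c g := by simp [sh]

lemma sh_sub (c : ℤ) (f g : K[X]) : sh c (f - g) = sh c f - sh c g := by
  simp [sh, sub_comp]

lemma sh_zero (f : K[X]) : sh 0 f = f := by simp [sh]

lemma sh_zero' (c : ℤ) : sh c (0 : K[X]) = 0 := by simp [sh]

lemma sh_eq_zero_iff (c : ℤ) (f : K[X]) : sh c f = 0 ↔ f = 0 := comp_X_add_C_eq_zero_iff

lemma sh_ne_zero (c : ℤ) {f : K[X]} (hf : f ≠ 0) : sh c f ≠ 0 := by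
  simp [sh_eq_zero_iff, hf]

lemma sh_dvd (c : ℤ) {f g : K[X]} (h : f ∣ g) : sh c f ∣ sh c g := by
  obtain ⟨r, rfl⟩ := h; exact ⟨sh c r, sh_mul c f r⟩

lemma sh_irreducible (c : ℤ) {f : K[X]} (h : Irreducible f) : Irreducible (sh c f) := by
  rw [sh_C_eq]; exact h.map (algEquivAevalXAddC ((c : ℤ) : K))

lemma sh_eval (c : ℤ) (f : K[X]) (x : K) : (sh c f).eval x = f.eval (x + c) := by
  simp [sh, eval_comp]

lemma multiplicity_sh (c : ℤ) (q f : K[X]) :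
    multiplicity (sh c q) (sh c f) = multiplicity q f := by
  rw [sh_C_eq, sh_C_eq]
  exact multiplicity_map_eq (algEquivAevalXAddC ((c : ℤ) : K)).toMulEquiv

lemma multiplicity_mul' {p f g : K[X]} (hp : Prime p) (hf : f ≠ 0) (hg : g ≠ 0) :
    multiplicity p (f * g) = multiplicity p f + multiplicity p g :=
  multiplicity_mul hp (FiniteMultiplicity.of_not_isUnit hp.not_isUnit (mul_ne_zero hf hg))

lemma multiplicity_prod' {ι : Type*} {p : K[X]} (hp : Prime p) (s : Finset ι) (f : ι → K[X])
    (hf : ∀ i ∈ s, f i ≠ 0) :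
    multiplicity p (∏ i ∈ s, f i) = ∑ i ∈ s, multiplicity p (f i) := by
  classical
  induction s using Finset.induction_on with
  | empty =>
      simp [multiplicity_eq_zero.2 (by simpa using hp.not_dvd_one)]
  | @insert a s ha ih =>
      rw [Finset.prod_insert ha, Finset.sum_insert ha,
        multiplicity_mul' hp (hf a (Finset.mem_insert_self a s))
          (Finset.prod_ne_zero_iff.2 fun i hi => hf i (Finset.mem_insert_of_mem hi)),
        ih fun i hi => hf i (Finset.mem_insert_of_mem hi)]

/-- Min-attained-twice principle. -/
lemma exists_other_mult_le {p : K[X]} (hp : Prime p)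
    (jset : Finset ℕ) (T : ℕ → K[X]) (hT : ∀ j ∈ jset, T j ≠ 0)
    (hsum : ∑ j ∈ jset, T j = 0) {j₀ : ℕ} (hj₀ : j₀ ∈ jset)
    (hne : (jset.erase j₀).Nonempty) :
    ∃ j ∈ jset, j ≠ j₀ ∧ multiplicity p (T j) ≤ multiplicity p (T j₀) := by
  classical
  set c : ℕ := (jset.erase j₀).inf' hne (fun j => multiplicity p (T j)) with hc
  have hdvd : ∀ j ∈ jset.erase j₀, p ^ c ∣ T j := fun j hj =>
    pow_dvd_of_le_multiplicity (by exact_mod_cast Finset.inf'_le _ hj)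
  have hsum' : T j₀ + ∑ j ∈ jset.erase j₀, T j = 0 := by
    rwa [Finset.add_sum_erase _ _ hj₀]
  have hDvd : p ^ c ∣ T j₀ := by
    have : T j₀ = -∑ j ∈ jset.erase j₀, T j := by linear_combination hsum'
    rw [this]
    exact dvd_neg.2 (Finset.dvd_sum hdvd)
  have hle : c ≤ multiplicity p (T j₀) :=
    (FiniteMultiplicity.of_not_isUnit hp.not_isUnit (hT j₀ hj₀)).le_multiplicity_of_pow_dvd hDvd
  obtain ⟨j, hj, hjeq⟩ := Finset.exists_mem_eq_inf' hne (fun j => multiplicity p (T j))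
  exact ⟨j, Finset.mem_of_mem_erase hj, Finset.ne_of_mem_erase hj, by
    rw [← hjeq] at *; omega⟩

/-- The set of integer shifts `m` such that `q(X+m) ∣ f` is finite. -/
lemma finite_shift_dvd {q f : K[X]} (hq : Irreducible q) (hf : f ≠ 0) :
    Set.Finite {m : ℤ | sh m q ∣ f} := by
  classical
  set L := AlgebraicClosure K
  have : CharZero L := charZero_of_injective_algebraMap (algebraMap K L).injective
  have hqdeg : (q.map (algebraMap K L)).degree ≠ 0 := by
    rw [degree_map]
    intro h
    exact hq.not_isUnit (isUnit_iff_degree_eq_zero.2 h)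
  obtain ⟨θ, hθ⟩ := IsAlgClosed.exists_root (q.map (algebraMap K L)) hqdeg
  have hsub : {m : ℤ | sh m q ∣ f} ⊆
      (fun m : ℤ => θ - (m : L)) ⁻¹' {x | IsRoot (f.map (algebraMap K L)) x} := by
    intro m hm
    obtain ⟨g, hg⟩ := hm
    simp only [Set.mem_preimage, Set.mem_setOf_eq, IsRoot]
    rw [hg, Polynomial.map_mul, eval_mul]
    have : ((sh m q).map (algebraMap K L)).eval (θ - (m : L)) = 0 := by
      rw [sh, map_comp, eval_comp]
      simp only [Polynomial.map_add, map_X, map_C, eval_add, eval_X, eval_C]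
      have : algebraMap K L ((m : ℤ) : K) = ((m : ℤ) : L) := by
        rw [map_intCast]
      rw [this, sub_add_cancel, hθ]
    rw [this, zero_mul]
  refine Set.Finite.subset (Set.Finite.preimage ?_ (finite_setOf_isRoot (by
    simpa using hf))) hsub
  intro x _ y _ hxy
  have hxy' : θ - (x:L) = θ - (y:L) := hxy
  have : (x : L) = (y : L) := by linear_combination -hxy'
  exact_mod_cast this

lemma exists_nat_bound {S : Set ℤ} (h : S.Finite) :
    ∃ N : ℕ, ∀ m : ℤ, (N : ℤ) < |m| → m ∉ S := by
  classical
  refine ⟨h.toFinset.sup (fun m => m.natAbs), fun m hm hmS => ?_⟩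
  have : m.natAbs ≤ h.toFinset.sup (fun m => m.natAbs) :=
    Finset.le_sup (h.mem_toFinset.2 hmS)
  rw [Int.abs_eq_natAbs] at hm
  omega

lemma eventually_eval_ne_zero {p : K[X]} (hp : p ≠ 0) :
    ∃ N : ℕ, ∀ n : ℕ, N ≤ n → p.eval (n : K) ≠ 0 := by
  classical
  have hfin : Set.Finite {n : ℕ | p.eval (n : K) = 0} := by
    refine Set.Finite.preimage ?_ (finite_setOf_isRoot hp)
    exact fun x _ y _ h => Nat.cast_injective h
  obtain ⟨N, hN⟩ := hfin.bddAbove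
  exact ⟨N + 1, fun n hn h => by
    have := hN h
    omega⟩

lemma exists_max_pred (P : ℤ → Prop) (lo hi : ℤ)
    (hbd : ∀ m, P m → lo ≤ m ∧ m ≤ hi) (hne : ∃ m, P m) :
    ∃ M, P M ∧ ∀ x, P x → x ≤ M := by
  classical
  have hT : ∀ m, P m → m ∈ (Finset.Icc lo hi).filter P := by
    intro m hm
    exact Finset.mem_filter.mpr ⟨Finset.mem_Icc.mpr (hbd m hm), hm⟩
  obtain ⟨t, ht⟩ := hne
  have hTne : ((Finset.Icc lo hi).filter P).Nonempty := ⟨t, hT t ht⟩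
  refine ⟨((Finset.Icc lo hi).filter P).max' hTne,
    (Finset.mem_filter.mp (Finset.max'_mem _ hTne)).2, fun x hx => Finset.le_max' _ _ (hT x hx)⟩

lemma exists_min_pred (P : ℤ → Prop) (lo hi : ℤ)
    (hbd : ∀ m, P m → lo ≤ m ∧ m ≤ hi) (hne : ∃ m, P m) :
    ∃ M, P M ∧ ∀ x, P x → M ≤ x := by
  classical
  have hT : ∀ m, P m → m ∈ (Finset.Icc lo hi).filter P := by
    intro m hm
    exact Finset.mem_filter.mpr ⟨Finset.mem_Icc.mpr (hbd m hm), hm⟩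
  obtain ⟨t, ht⟩ := hne
  have hTne : ((Finset.Icc lo hi).filter P).Nonempty := ⟨t, hT t ht⟩
  refine ⟨((Finset.Icc lo hi).filter P).min' hTne,
    (Finset.mem_filter.mp (Finset.min'_mem _ hTne)).2, fun x hx => Finset.min'_le _ _ (hT x hx)⟩

lemma core (J : ℕ) (hJ : 0 < J) (s : Finset ℕ)
    (h0s : 0 ∈ s) (hJs : J ∈ s) (hsub : ∀ i ∈ s, i ≤ J)
    (am β κ π : ℤ → ℤ) (α : ℕ → ℤ → ℤ)
    (ham : ∀ m, 0 ≤ am m) (hβ : ∀ m, 0 ≤ β m) (hκ : ∀ m, 0 ≤ κ m)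
    (hπ : ∀ m, 0 ≤ π m) (hα : ∀ i m, 0 ≤ α i m)
    (V : ℕ → ℤ → ℤ)
    (hVR : ∀ m, V (J+1) m = am m - β m)
    (hVi : ∀ i ∈ s, ∀ m, V i m = π (m-1+i) - κ (m-1+i) + α i (m+i) - α J (m+i))
    (N : ℕ)
    (hN : ∀ m : ℤ, (N:ℤ) < |m| → β m = 0 ∧ κ m = 0 ∧ π m = 0 ∧ α 0 m = 0 ∧ α J m = 0)
    (MT : ∀ m : ℤ, ∀ j₀ ∈ insert (J+1) s, ∃ j ∈ insert (J+1) s, j ≠ j₀ ∧ V j m ≤ V j₀ m)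
    (hco : ∀ m, 0 < β m → am m = 0)
    (h1 : ∀ m m', 0 < α 0 m → 0 < α J m' → m < m')
    (h2 : ∀ m m', 0 < β m → 0 < β m' → m' - m ≤ (J:ℤ) - 1)
    (h3 : ∀ m m', 0 < α 0 m → 0 < β m' → m - (J:ℤ) + 1 ≤ m')
    (h4 : ∀ m m', 0 < β m → 0 < α J m' → m < m')
    (h0 : 0 < β 0) : False := by
  have hJ1 : (1:ℤ) ≤ (J:ℤ) := by exact_mod_cast hJ
  -- general facts
  have hVJ : ∀ m : ℤ, V J m = π (m - 1 + J) - κ (m - 1 + J) := by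
    intro m
    have e := hVi J hJs m
    omega
  have hnegb : ∀ j ∈ s, ∀ m : ℤ, V j m < 0 → 0 < κ (m - 1 + j) ∨ 0 < α J (m + j) := by
    intro j hj m h
    have e := hVi j hj m
    have := hκ (m - 1 + j); have := hα J (m + j); have := hπ (m - 1 + j)
    have := hα j (m + j)
    omega
  have hβsupp : ∀ m : ℤ, 0 < β m → -(N:ℤ) ≤ m ∧ m ≤ N := by
    intro m h; by_contra hc
    have : (N:ℤ) < |m| := by rw [lt_abs]; omega
    have := (hN m this).1; omega
  have hκsupp : ∀ m : ℤ, 0 < κ m → -(N:ℤ) ≤ m ∧ m ≤ N := by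
    intro m h; by_contra hc
    have : (N:ℤ) < |m| := by rw [lt_abs]; omega
    have := (hN m this).2.1; omega
  have hαJsupp : ∀ m : ℤ, 0 < α J m → -(N:ℤ) ≤ m ∧ m ≤ N := by
    intro m h; by_contra hc
    have : (N:ℤ) < |m| := by rw [lt_abs]; omega
    have := (hN m this).2.2.2.2; omega
  -- the push lemma
  have push : ∀ j ∈ s, 1 ≤ j → ∀ m : ℤ, V j m < 0 → 0 < α J (m + j) → V 0 (m + j) < 0 := by
    intro j hj hj1 m hV hαJ
    have hα0 : α 0 (m + j) = 0 := by
      by_contra h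
      have hpos : 0 < α 0 (m + j) := lt_of_le_of_ne (hα 0 _) (Ne.symm h)
      have := h1 (m + j) (m + j) hpos hαJ
      omega
    have e1 := hVi j hj m
    have e2 := hVi 0 h0s (m + j)
    rw [show m + (j:ℤ) - 1 + ((0:ℕ):ℤ) = m - 1 + j by push_cast; ring,
      show m + (j:ℤ) + ((0:ℕ):ℤ) = m + j by push_cast; ring] at e2
    have := hα j (m + j)
    omega
  by_cases hS : ∃ t : ℤ, π t - κ t < 0
  case neg =>
    -- Claim 1 : no poles of W at all, contradiction
    push_neg at hS
    have hbd : ∀ m : ℤ, (∃ j ∈ insert (J+1) s, V j m < 0) →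
        -(N:ℤ) - J - 1 ≤ m ∧ m ≤ (N:ℤ) + J + 1 := by
      intro m hm
      obtain ⟨j, hjmem, hjneg⟩ := hm
      rcases Finset.mem_insert.1 hjmem with h | h
      · subst h
        have := hVR m
        have hβm : 0 < β m := by have := ham m; omega
        have := hβsupp m hβm; omega
      · have hjJ : (j:ℤ) ≤ J := by exact_mod_cast hsub j h
        have hj0 : (0:ℤ) ≤ j := by positivity
        rcases hnegb j h m hjneg with hk | ha
        · have := hκsupp _ hk; omega
        · have := hαJsupp _ ha; omega
    have hne : ∃ m : ℤ, ∃ j ∈ insert (J+1) s, V j m < 0 := by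
      refine ⟨0, J+1, Finset.mem_insert_self _ _, ?_⟩
      rw [hVR]; have := hco 0 h0; omega
    obtain ⟨M, hMP, hMtop⟩ := exists_max_pred _ _ _ hbd hne
    obtain ⟨j₁, hj₁mem, hj₁neg⟩ := hMP
    obtain ⟨j₂, hj₂mem, hj₂ne, hj₂le⟩ := MT M j₁ hj₁mem
    have hj₂neg : V j₂ M < 0 := lt_of_le_of_lt hj₂le hj₁neg
    have key : ∀ j ∈ s, V j M < 0 → 0 < α J (M + j) := by
      intro j hj hneg
      have e := hVi j hj M
      have := hS (M - 1 + (j:ℤ))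
      have := hα j (M + j)
      omega
    obtain ⟨jj, hjjs, hjj1, hjjneg⟩ :
        ∃ jj ∈ s, 1 ≤ jj ∧ V jj M < 0 := by
      rcases Finset.mem_insert.1 hj₁mem with e₁ | h₁ <;>
        rcases Finset.mem_insert.1 hj₂mem with e₂ | h₂
      · exact absurd (e₂.trans e₁.symm) hj₂ne
      · have hβM : 0 < β M := by
          rw [e₁, hVR] at hj₁neg; have := ham M; omega
        have hk := key j₂ h₂ hj₂neg
        have := h4 M (M + (j₂:ℤ)) hβM hk
        exact ⟨j₂, h₂, by omega, hj₂neg⟩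
      · have hβM : 0 < β M := by
          rw [e₂, hVR] at hj₂neg; have := ham M; omega
        have hk := key j₁ h₁ hj₁neg
        have := h4 M (M + (j₁:ℤ)) hβM hk
        exact ⟨j₁, h₁, by omega, hj₁neg⟩
      · rcases Nat.eq_zero_or_pos j₁ with rfl | hp
        · exact ⟨j₂, h₂, by omega, hj₂neg⟩
        · exact ⟨j₁, h₁, hp, hj₁neg⟩
    have hαjj := key jj hjjs hjjneg
    have hpush := push jj hjjs hjj1 M hjjneg hαjj
    have := hMtop (M + (jj:ℤ)) ⟨0, Finset.mem_insert_of_mem h0s, hpush⟩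
    have hjj1' : (1:ℤ) ≤ (jj:ℤ) := by exact_mod_cast hjj1
    omega
  case pos =>
    have hSbd : ∀ t : ℤ, π t - κ t < 0 → -(N:ℤ) ≤ t ∧ t ≤ (N:ℤ) := by
      intro t h
      exact hκsupp t (by have := hπ t; omega)
    obtain ⟨tm, htmneg', htmmin⟩ := exists_min_pred _ _ _ hSbd hS
    obtain ⟨tp, htpneg', htpmax⟩ := exists_max_pred _ _ _ hSbd hS
    have htmneg : π tm - κ tm < 0 := htmneg'
    have htpneg : π tp - κ tp < 0 := htpneg'
    have htmtp : tm ≤ tp := htmmin _ htpneg'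
    have hwlt : ∀ t : ℤ, t < tm → 0 ≤ π t - κ t := by
      intro t ht
      by_contra hc; push_neg at hc
      have := htmmin _ hc; omega
    have hwgt : ∀ t : ℤ, tp < t → 0 ≤ π t - κ t := by
      intro t ht
      by_contra hc; push_neg at hc
      have := htpmax _ hc; omega
    -- Lemma L
    have hL : 0 < β (tm - J + 1) ∨ ∃ p : ℤ, p ≤ tm ∧ 0 < α J p := by
      have hVJneg : V J (tm - J + 1) < 0 := by
        rw [hVJ, show tm - (J:ℤ) + 1 - 1 + (J:ℤ) = tm by ring]
        exact htmneg
      obtain ⟨j, hjmem, hjne, hjle⟩ := MT (tm - J + 1) J (Finset.mem_insert_of_mem hJs)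
      have hjneg : V j (tm - J + 1) < 0 := lt_of_le_of_lt hjle hVJneg
      rcases Finset.mem_insert.1 hjmem with e | h
      · subst e
        left
        rw [hVR] at hjneg; have := ham (tm - J + 1); omega
      · right
        have hjJ : j < J := lt_of_le_of_ne (hsub j h) hjne
        have hjJ' : (j:ℤ) < J := by exact_mod_cast hjJ
        have hj0 : (0:ℤ) ≤ j := by positivity
        have e := hVi j h (tm - J + 1)
        have hw := hwlt (tm - J + 1 - 1 + j) (by omega)
        have hα' := hα j (tm - J + 1 + j)
        refine ⟨tm - J + 1 + j, by omega, by omega⟩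
    -- Lemma R
    have hR : 0 < α 0 (tp + 1) ∨ ∃ p : ℤ, tp + 1 ≤ p ∧ 0 < β p := by
      have e0 := hVi 0 h0s (tp + 1)
      rw [show tp + 1 - 1 + ((0:ℕ):ℤ) = tp by push_cast; ring,
        show tp + 1 + ((0:ℕ):ℤ) = tp + 1 by push_cast; ring] at e0
      by_cases hcase : V 0 (tp + 1) < 0
      · -- ascent
        have hbd0 : ∀ p : ℤ, (tp + 1 ≤ p ∧ V 0 p < 0) → tp + 1 ≤ p ∧ p ≤ (N:ℤ) + 1 := by
          intro p hp
          obtain ⟨hp1, hneg⟩ := hp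
          refine ⟨hp1, ?_⟩
          rcases hnegb 0 h0s p hneg with hk | ha
          · rw [show p - 1 + ((0:ℕ):ℤ) = p - 1 by push_cast; ring] at hk
            have := hκsupp _ hk; omega
          · rw [show p + ((0:ℕ):ℤ) = p by push_cast; ring] at ha
            have := hαJsupp _ ha; omega
        obtain ⟨ph, hphP, hphtop⟩ := exists_max_pred _ _ _ hbd0 ⟨tp + 1, le_rfl, hcase⟩
        obtain ⟨hphge, hphneg⟩ := hphP
        obtain ⟨j, hjmem, hjne, hjle⟩ := MT ph 0 (Finset.mem_insert_of_mem h0s)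
        have hjneg : V j ph < 0 := lt_of_le_of_lt hjle hphneg
        rcases Finset.mem_insert.1 hjmem with e | h
        · subst e
          right
          rw [hVR] at hjneg; have := ham ph
          exact ⟨ph, hphge, by omega⟩
        · exfalso
          have hj1 : 1 ≤ j := Nat.one_le_iff_ne_zero.2 hjne
          have hj1' : (1:ℤ) ≤ (j:ℤ) := by exact_mod_cast hj1
          have e := hVi j h ph
          have hw := hwgt (ph - 1 + j) (by omega)
          have hα' := hα j (ph + j)
          have hαJp : 0 < α J (ph + j) := by omega
          have hpush := push j h hj1 ph hjneg hαJp
          have := hphtop (ph + (j:ℤ)) ⟨by omega, hpush⟩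
          omega
      · push_neg at hcase
        left
        have := hα J (tp + 1)
        omega
    -- Final contradiction
    rcases hL with hL1 | ⟨p, hple, hpαJ⟩ <;> rcases hR with hR1 | ⟨p', hp'ge, hp'β⟩
    · have := h3 (tp + 1) (tm - J + 1) hR1 hL1
      omega
    · have := h2 (tm - J + 1) p' hL1 hp'β
      omega
    · have := h1 (tp + 1) p hR1 hpαJ
      omega
    · have := h4 p' p hp'β hpαJ
      omega


lemma coeffs_eq_zero (F : ℕ → K) (J : ℕ) (hJ : 0 < J)
    (hord : HasOrder F J) (c : ℕ → K[X]) (N : ℕ)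
    (hrel : ∀ n : ℕ, N ≤ n → ∑ i ∈ Finset.range J, (c i).eval (n:K) * F (n+i) = 0) :
    ∀ i, i < J → c i = 0 := by
  classical
  set m : K[X] := ∏ t ∈ Finset.range N, (X - C (t:K)) with hm_def
  have hm : m ≠ 0 := by
    rw [hm_def]
    exact Finset.prod_ne_zero_iff.2 fun t _ => X_sub_C_ne_zero (t:K)
  have hann' : Annihilates (J-1) (fun i => m * c i) F := by
    intro n
    rw [show J - 1 + 1 = J by omega]
    by_cases hn : N ≤ n
    · have : ∀ i ∈ Finset.range J, (m * c i).eval (n:K) * F (n+i)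
          = m.eval (n:K) * ((c i).eval (n:K) * F (n+i)) := by
        intro i _; rw [eval_mul]; ring
      rw [Finset.sum_congr rfl this, ← Finset.mul_sum, hrel n hn, mul_zero]
    · have hmn : m.eval (n:K) = 0 := by
        rw [hm_def, eval_prod]
        refine Finset.prod_eq_zero (i := n) (Finset.mem_range.2 (by omega)) ?_
        simp
      refine Finset.sum_eq_zero fun i _ => ?_
      rw [eval_mul, hmn, zero_mul, zero_mul]
  intro i hi
  by_contra hc
  exact hord.2 (J-1) (by omega) (fun i => m * c i)
    ⟨i, by omega, mul_ne_zero hm hc⟩ hann'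

lemma coeffs_eq_zero' (F : ℕ → K) (J : ℕ) (hJ : 0 < J)
    (hord : HasOrder F J) (c d : ℕ → K[X]) (hd : ∀ i, i < J → d i ≠ 0) (N : ℕ)
    (hrel : ∀ n : ℕ, N ≤ n → (∀ i, i < J → (d i).eval (n:K) ≠ 0) →
      ∑ i ∈ Finset.range J, (c i).eval (n:K) / (d i).eval (n:K) * F (n+i) = 0) :
    ∀ i, i < J → c i = 0 := by
  classical
  have hD : (∏ j ∈ Finset.range J, d j) ≠ 0 :=
    Finset.prod_ne_zero_iff.2 fun j hj => hd j (Finset.mem_range.1 hj)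
  obtain ⟨N₁, hN₁⟩ := eventually_eval_ne_zero hD
  have hdev : ∀ n : ℕ, N₁ ≤ n → ∀ i, i < J → (d i).eval (n:K) ≠ 0 := by
    intro n hn i hi h
    apply hN₁ n hn
    rw [eval_prod]
    exact Finset.prod_eq_zero (Finset.mem_range.2 hi) h
  have key : ∀ i, i < J → c i * ∏ j ∈ (Finset.range J).erase i, d j = 0 := by
    refine coeffs_eq_zero F J hJ hord _ (max N N₁) (fun n hn => ?_)
    have hn1 : N ≤ n := le_trans (le_max_left _ _) hn
    have hn2 : N₁ ≤ n := le_trans (le_max_right _ _) hn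
    have : ∀ i ∈ Finset.range J,
        (c i * ∏ j ∈ (Finset.range J).erase i, d j).eval (n:K) * F (n+i)
        = ((c i).eval (n:K) / (d i).eval (n:K) * F (n+i)) *
            (∏ j ∈ Finset.range J, d j).eval (n:K) := by
      intro i hi
      have hi' := Finset.mem_range.1 hi
      rw [eval_mul, eval_prod, eval_prod]
      rw [← Finset.mul_prod_erase _ _ hi]
      have hdi := hdev n hn2 i hi'
      field_simp
    rw [Finset.sum_congr rfl this, ← Finset.sum_mul, hrel n hn1 (hdev n hn2), zero_mul]
  intro i hi
  have h := key i hi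
  have : (∏ j ∈ (Finset.range J).erase i, d j) ≠ 0 :=
    Finset.prod_ne_zero_iff.2 fun j hj => hd j (Finset.mem_range.1 (Finset.mem_of_mem_erase hj))
  exact (mul_eq_zero.1 h).resolve_right this


/-- The master polynomial identity obtained by telescoping the certificate equations. -/
lemma PE (J' : ℕ) (A : ℕ → K[X]) (a b : K[X]) (u v : ℕ → K[X])
    (hb : b ≠ 0) (hAJ : A (J'+1) ≠ 0)
    (hv : ∀ i, i ≤ J' → v i ≠ 0)
    (hEq0 : a * v 0 * sh 1 (v J') * A (J'+1) + u 0 * b * sh 1 (v J') * A (J'+1)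
      + sh 1 (u J') * A 0 * b * v 0 = 0)
    (hEqk : ∀ k, k < J' →
      sh 1 (u k) * sh 1 (v J') * A (J'+1) * v (k+1)
        - sh 1 (u J') * A (k+1) * sh 1 (v k) * v (k+1)
        - u (k+1) * sh 1 (v k) * sh 1 (v J') * A (J'+1) = 0) :
    a * ∏ j ∈ Finset.range (J'+2), (sh (1-(j:ℤ)) (v J') * sh (-(j:ℤ)) (A (J'+1)))
      + ∑ i ∈ Finset.range (J'+2), b * sh (1-(i:ℤ)) (u J') * sh (-(i:ℤ)) (A i) *
        ∏ j ∈ (Finset.range (J'+2)).erase i,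
          (sh (1-(j:ℤ)) (v J') * sh (-(j:ℤ)) (A (J'+1))) = 0 := by
  classical
  set Φ : K[X] →+* RatFunc K := (algebraMap K[X] (RatFunc K)) with hΦ
  have hΦinj : Function.Injective Φ := RatFunc.algebraMap_injective K
  have hΦne : ∀ {f : K[X]}, f ≠ 0 → Φ f ≠ 0 := fun hf => by
    simpa using fun h => hf (hΦinj (by simpa using h))
  -- the rational-function certificate terms
  set w : ℤ → RatFunc K := fun c => Φ (sh c (u J')) / Φ (sh c (v J')) with hw
  set AA : ℕ → ℤ → RatFunc K :=
    fun i c => Φ (sh c (A i)) / Φ (sh c (A (J'+1))) with hAA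
  -- the telescoping induction
  have ind : ∀ l, l ≤ J' →
      Φ (sh (-(l:ℤ)) (u l)) / Φ (sh (-(l:ℤ)) (v l))
        = -(Φ a / Φ b) - ∑ k ∈ Finset.range (l+1), w (1-(k:ℤ)) * AA k (-(k:ℤ)) := by
    intro l
    induction l with
    | zero =>
      intro _
      have h0 := congrArg Φ hEq0
      rw [map_add, map_add, map_zero] at h0
      simp only [map_mul] at h0
      have hb' := hΦne hb
      have hv0 := hΦne (hv 0 (Nat.zero_le _))
      have hvJ := hΦne (sh_ne_zero 1 (hv J' le_rfl))
      have hAJ' := hΦne hAJ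
      rw [Finset.sum_range_one]
      simp only [hw, hAA, Nat.cast_zero, neg_zero, sub_zero, sh_zero]
      field_simp
      linear_combination h0
    | succ l ih =>
      intro hl
      have hIH := ih (by omega)
      have hk := hEqk l (by omega)
      have h1 := congrArg (sh (-(l+1) : ℤ)) hk
      rw [sh_sub, sh_sub, sh_zero'] at h1
      simp only [sh_mul, sh_comp] at h1
      rw [show (-(l+1) : ℤ) + 1 = -(l:ℤ) by ring] at h1
      have h2 := congrArg Φ h1
      rw [map_sub, map_sub, map_zero] at h2
      simp only [map_mul] at h2
      -- nonzero denominators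
      have hvl := hΦne (sh_ne_zero (-(l:ℤ)) (hv l (by omega)))
      have hvl1 := hΦne (sh_ne_zero (-(l+1:ℤ)) (hv (l+1) (by omega)))
      have hvJ := hΦne (sh_ne_zero (-(l:ℤ)) (hv J' le_rfl))
      have hAJ' := hΦne (sh_ne_zero (-(l+1:ℤ)) hAJ)
      have key : Φ (sh (-(l:ℤ)+ -1) (u (l+1))) / Φ (sh (-(l:ℤ)+ -1) (v (l+1)))
          = Φ (sh (-(l:ℤ)) (u l)) / Φ (sh (-(l:ℤ)) (v l))
            - w (-(l:ℤ)) * AA (l+1) (-(l:ℤ)+ -1) := by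
        simp only [hw, hAA]
        rw [show (-(l:ℤ) + -1) = -((l:ℤ)+1) by ring]
        revert h2
        generalize Φ (sh (-(l:ℤ)) (u l)) = x1 at hvl hvl1 hvJ hAJ' ⊢
        generalize Φ (sh (-(l:ℤ)) (v l)) = x2 at hvl hvl1 hvJ hAJ' ⊢
        generalize Φ (sh (-(l:ℤ)) (u J')) = x3 at hvl hvl1 hvJ hAJ' ⊢
        generalize Φ (sh (-(l:ℤ)) (v J')) = x4 at hvl hvl1 hvJ hAJ' ⊢
        generalize Φ (sh (-((l:ℤ)+1)) (u (l+1))) = x5 at hvl hvl1 hvJ hAJ' ⊢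
        generalize Φ (sh (-((l:ℤ)+1)) (v (l+1))) = x6 at hvl hvl1 hvJ hAJ' ⊢
        generalize Φ (sh (-((l:ℤ)+1)) (A (l+1))) = x7 at hvl hvl1 hvJ hAJ' ⊢
        generalize Φ (sh (-((l:ℤ)+1)) (A (J'+1))) = x8 at hvl hvl1 hvJ hAJ' ⊢
        intro h2
        field_simp
        linear_combination -h2
      rw [show ((l+1 : ℕ) : ℤ) = (l:ℤ)+1 by push_cast; ring,
        show (-((l:ℤ)+1)) = -(l:ℤ) + -1 by ring]
      rw [key, hIH, Finset.sum_range_succ (n := l+1),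
        show (1 - ((l+1:ℕ):ℤ)) = -(l:ℤ) by push_cast; ring,
        show (-((l+1:ℕ):ℤ)) = -(l:ℤ) + -1 by push_cast; ring]
      ring
  -- total rational identity
  have hself : AA (J'+1) (-(J'+1:ℤ)) = 1 := by
    simp only [hAA]
    exact div_self (hΦne (sh_ne_zero _ hAJ))
  have total : Φ a / Φ b
      + ∑ k ∈ Finset.range (J'+2), w (1-(k:ℤ)) * AA k (-(k:ℤ)) = 0 := by
    have hJ'1 : w (-(J':ℤ)) = Φ (sh (-(J':ℤ)) (u J')) / Φ (sh (-(J':ℤ)) (v J')) := rfl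
    have hind := ind J' le_rfl
    rw [Finset.sum_range_succ,
      show (1 - ((J'+1:ℕ):ℤ)) = -(J':ℤ) by push_cast; ring,
      show (-((J'+1:ℕ):ℤ)) = -(J'+1:ℤ) by push_cast; ring, hself, hJ'1, hind]
    ring
  -- clear denominators
  set g : ℕ → K[X] := fun j => sh (1-(j:ℤ)) (v J') * sh (-(j:ℤ)) (A (J'+1)) with hg
  have hgne : ∀ j, g j ≠ 0 := fun j =>
    mul_ne_zero (sh_ne_zero _ (hv J' le_rfl)) (sh_ne_zero _ hAJ)
  have hΦprod : ∀ (s : Finset ℕ), Φ (∏ j ∈ s, g j) = ∏ j ∈ s, Φ (g j) := fun s => map_prod Φ _ s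
  have hterm : ∀ i ∈ Finset.range (J'+2),
      (w (1-(i:ℤ)) * AA i (-(i:ℤ))) * Φ (b * ∏ j ∈ Finset.range (J'+2), g j)
        = Φ (b * sh (1-(i:ℤ)) (u J') * sh (-(i:ℤ)) (A i) *
            ∏ j ∈ (Finset.range (J'+2)).erase i, g j) := by
    intro i hi
    have hsplit : (∏ j ∈ Finset.range (J'+2), g j)
        = g i * ∏ j ∈ (Finset.range (J'+2)).erase i, g j :=
      (Finset.mul_prod_erase _ _ hi).symm
    rw [hsplit]
    simp only [hw, hAA, map_mul, hg]
    have h1 := hΦne (sh_ne_zero (1-(i:ℤ)) (hv J' le_rfl))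
    have h2 := hΦne (sh_ne_zero (-(i:ℤ)) hAJ)
    field_simp
  have htR : (Φ a / Φ b) * Φ (b * ∏ j ∈ Finset.range (J'+2), g j)
      = Φ (a * ∏ j ∈ Finset.range (J'+2), g j) := by
    rw [map_mul, map_mul]
    have hb' := hΦne hb
    field_simp
  have final : Φ (a * ∏ j ∈ Finset.range (J'+2), g j
      + ∑ i ∈ Finset.range (J'+2), b * sh (1-(i:ℤ)) (u J') * sh (-(i:ℤ)) (A i) *
          ∏ j ∈ (Finset.range (J'+2)).erase i, g j) = 0 := by
    rw [map_add, map_sum]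
    have := congrArg (fun z => z * Φ (b * ∏ j ∈ Finset.range (J'+2), g j)) total
    simp only [add_mul, zero_mul, Finset.sum_mul] at this
    rw [← htR, ← Finset.sum_congr rfl hterm]
    exact this
  have h0 : Φ (a * ∏ j ∈ Finset.range (J'+2), g j
      + ∑ i ∈ Finset.range (J'+2), b * sh (1-(i:ℤ)) (u J') * sh (-(i:ℤ)) (A i) *
          ∏ j ∈ (Finset.range (J'+2)).erase i, g j) = Φ 0 := by
    rw [map_zero, final]
  exact hΦinj h0


/-- multiplicity of a shifted irreducible in a shifted polynomial. -/
lemma mult_sh_gen (q : K[X]) (m c : ℤ) (f : K[X]) :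
    multiplicity (sh m q) (sh c f) = multiplicity (sh (m - c) q) f := by
  conv_lhs => rw [show m = c + (m - c) by ring, ← sh_comp c (m-c) q]
  exact multiplicity_sh c (sh (m-c) q) f

/-- `mQ q f m` : multiplicity of `q(X+m)` in `f`, as an integer. -/
noncomputable def mQ (q f : K[X]) (m : ℤ) : ℤ := (multiplicity (sh m q) f : ℤ)

lemma mQ_nonneg (q f : K[X]) (m : ℤ) : 0 ≤ mQ q f m := Int.ofNat_nonneg _

/-- Expansion of the multiplicity of the "R-term". -/
lemma mQ_tR (q : K[X]) (hq : Irreducible q) (n : ℕ) (a Q AJ : K[X])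
    (ha : a ≠ 0) (hQ : Q ≠ 0) (hAJ : AJ ≠ 0) (m : ℤ) :
    (multiplicity (sh m q)
        (a * ∏ j ∈ Finset.range n, (sh (1-(j:ℤ)) Q * sh (-(j:ℤ)) AJ)) : ℤ)
      = mQ q a m + ∑ j ∈ Finset.range n, (mQ q Q (m-1+j) + mQ q AJ (m+j)) := by
  classical
  have hp : Prime (sh m q) :=
    UniqueFactorizationMonoid.irreducible_iff_prime.1 (sh_irreducible m hq)
  have hgne : ∀ j : ℕ, sh (1-(j:ℤ)) Q * sh (-(j:ℤ)) AJ ≠ 0 := fun j =>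
    mul_ne_zero (sh_ne_zero _ hQ) (sh_ne_zero _ hAJ)
  rw [multiplicity_mul' hp ha (Finset.prod_ne_zero_iff.2 fun j _ => hgne j),
    multiplicity_prod' hp _ _ (fun j _ => hgne j)]
  push_cast
  congr 1
  refine Finset.sum_congr rfl fun j _ => ?_
  rw [multiplicity_mul' hp (sh_ne_zero _ hQ) (sh_ne_zero _ hAJ)]
  push_cast
  rw [mult_sh_gen, mult_sh_gen,
    show m - (1-(j:ℤ)) = m - 1 + j by ring, show m - (-(j:ℤ)) = m + j by ring]
  rfl

/-- Expansion of the multiplicity of the `i`-th term. -/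
lemma mQ_t (q : K[X]) (hq : Irreducible q) (n : ℕ) (b P Ai Q AJ : K[X])
    (hb : b ≠ 0) (hP : P ≠ 0) (hAi : Ai ≠ 0) (hQ : Q ≠ 0) (hAJ : AJ ≠ 0)
    (i : ℕ) (hi : i ∈ Finset.range n) (m : ℤ) :
    (multiplicity (sh m q)
        (b * sh (1-(i:ℤ)) P * sh (-(i:ℤ)) Ai *
          ∏ j ∈ (Finset.range n).erase i, (sh (1-(j:ℤ)) Q * sh (-(j:ℤ)) AJ)) : ℤ)
      = mQ q b m + mQ q P (m-1+i) + mQ q Ai (m+i)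
        + (∑ j ∈ Finset.range n, (mQ q Q (m-1+j) + mQ q AJ (m+j)))
        - (mQ q Q (m-1+i) + mQ q AJ (m+i)) := by
  classical
  have hp : Prime (sh m q) :=
    UniqueFactorizationMonoid.irreducible_iff_prime.1 (sh_irreducible m hq)
  have hgne : ∀ j : ℕ, sh (1-(j:ℤ)) Q * sh (-(j:ℤ)) AJ ≠ 0 := fun j =>
    mul_ne_zero (sh_ne_zero _ hQ) (sh_ne_zero _ hAJ)
  have hprod : ∀ (s : Finset ℕ),
      (multiplicity (sh m q) (∏ j ∈ s, (sh (1-(j:ℤ)) Q * sh (-(j:ℤ)) AJ)) : ℤ)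
        = ∑ j ∈ s, (mQ q Q (m-1+j) + mQ q AJ (m+j)) := by
    intro s
    rw [multiplicity_prod' hp _ _ (fun j _ => hgne j)]
    push_cast
    refine Finset.sum_congr rfl fun j _ => ?_
    rw [multiplicity_mul' hp (sh_ne_zero _ hQ) (sh_ne_zero _ hAJ)]
    push_cast
    rw [mult_sh_gen, mult_sh_gen,
      show m - (1-(j:ℤ)) = m - 1 + j by ring, show m - (-(j:ℤ)) = m + j by ring]
    rfl
  rw [multiplicity_mul' hp
      (mul_ne_zero (mul_ne_zero hb (sh_ne_zero _ hP)) (sh_ne_zero _ hAi))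
      (Finset.prod_ne_zero_iff.2 fun j _ => hgne j),
    multiplicity_mul' hp (mul_ne_zero hb (sh_ne_zero _ hP)) (sh_ne_zero _ hAi),
    multiplicity_mul' hp hb (sh_ne_zero _ hP)]
  push_cast
  rw [hprod]
  have herase : ∑ j ∈ (Finset.range n).erase i, (mQ q Q (m-1+j) + mQ q AJ (m+j))
      = (∑ j ∈ Finset.range n, (mQ q Q (m-1+j) + mQ q AJ (m+j)))
        - (mQ q Q (m-1+i) + mQ q AJ (m+i)) := by
    rw [← Finset.add_sum_erase _ _ hi]
    ring
  rw [herase, mult_sh_gen, mult_sh_gen,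
    show m - (1-(i:ℤ)) = m - 1 + i by ring, show m - (-(i:ℤ)) = m + i by ring]
  have : (multiplicity (sh (m-1+i) q) P : ℤ) = mQ q P (m-1+i) := rfl
  rw [this]
  have : (multiplicity (sh (m+i) q) Ai : ℤ) = mQ q Ai (m+i) := rfl
  rw [this]
  have : (multiplicity (sh m q) b : ℤ) = mQ q b m := rfl
  rw [this]
  ring


/-- The expected value of the `k`-th coefficient fraction. -/
noncomputable def gam (J' : ℕ) (r w : K) (RA Ru Rd : ℕ → K) : ℕ → K
  | 0 => -r - w * RA 0 - Rd 0
  | (j+1) => Ru j - w * RA (j+1) - Rd (j+1)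

lemma gam_sum (J' : ℕ) (r w : K) (RA Ru Rd x : ℕ → K)
    (hw : w * RA (J'+1) = Ru J')
    (hs : r * x 0 =
      (∑ i ∈ Finset.range (J'+1), Ru i * x (i+1)) - ∑ i ∈ Finset.range (J'+1), Rd i * x i)
    (hann : ∑ i ∈ Finset.range (J'+2), RA i * x i = 0) :
    ∑ i ∈ Finset.range (J'+1), gam J' r w RA Ru Rd i * x i = 0 := by
  rw [Finset.sum_range_succ']
  simp only [gam]
  rw [Finset.sum_range_succ] at hs
  rw [Finset.sum_range_succ'] at hs
  rw [show J' + 2 = (J'+1) + 1 by omega, Finset.sum_range_succ] at hann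
  rw [Finset.sum_range_succ'] at hann
  have expand : ∀ i ∈ Finset.range J',
      (Ru i - w * RA (i+1) - Rd (i+1)) * x (i+1)
        = Ru i * x (i+1) - w * (RA (i+1) * x (i+1)) - Rd (i+1) * x (i+1) := by
    intro i _; ring
  rw [Finset.sum_congr rfl expand, Finset.sum_sub_distrib, Finset.sum_sub_distrib,
    ← Finset.mul_sum]
  linear_combination (-1 : K) * hs - w * hann + x (J'+1) * hw


noncomputable def ccP {K : Type*} [Field K] [CharZero K] (J' : ℕ) (A : ℕ → K[X]) (a b : K[X])
    (u v : ℕ → K[X]) : ℕ → K[X]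
  | 0 => -(a * v 0 * sh 1 (v J') * A (J'+1) + u 0 * b * sh 1 (v J') * A (J'+1)
      + sh 1 (u J') * A 0 * b * v 0)
  | (j+1) => sh 1 (u j) * sh 1 (v J') * A (J'+1) * v (j+1)
      - sh 1 (u J') * A (j+1) * sh 1 (v j) * v (j+1)
      - u (j+1) * sh 1 (v j) * sh 1 (v J') * A (J'+1)

noncomputable def ddP {K : Type*} [Field K] [CharZero K] (J' : ℕ) (A : ℕ → K[X]) (b : K[X])
    (v : ℕ → K[X]) : ℕ → K[X]
  | 0 => b * sh 1 (v J') * A (J'+1) * v 0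
  | (j+1) => sh 1 (v j) * sh 1 (v J') * A (J'+1) * v (j+1)

end DDNaux

open DDNaux

/-- Let `F` be holonomic of order `J > 0`, annihilated by
`L = ∑_{i=0}^J A_i(n) σ^i` with `A_0(n)·A_J(n) ≠ 0`.  Let `a(n), b(n)` be coprime
polynomials with `(a(n)/b(n))·F(n)` summable.  If for every `h ∈ ℕ` one has
`gcd(A_0(n), A_J(n+h)) = gcd(b(n), b(n+J+h)) = gcd(A_0(n), b(n+J+h)) = gcd(b(n), A_J(n+h)) = 1`,
then `b(n)` divides `a(n)`. -/
theorem denominator_dvd_numerator {K : Type*} [Field K] [CharZero K]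
    (F : ℕ → K) (J : ℕ) (hJ : 0 < J) (A : ℕ → K[X])
    (hord : HasOrder F J) (hann : Annihilates J A F)
    (h0J : A 0 * A J ≠ 0)
    (a b : K[X]) (hb : b ≠ 0) (hab : IsCoprime a b)
    (hsum : IsSummableRat J F a b)
    (hc1 : ∀ h : ℕ, IsCoprime (A 0) ((A J).comp (X + C (h : K))))
    (hc2 : ∀ h : ℕ, IsCoprime b (b.comp (X + C ((J : K) + (h : K)))))
    (hc3 : ∀ h : ℕ, IsCoprime (A 0) (b.comp (X + C ((J : K) + (h : K)))))
    (hc4 : ∀ h : ℕ, IsCoprime b ((A J).comp (X + C (h : K)))) :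
    b ∣ a := by
  classical
  by_cases hazero : a = 0
  · rw [hazero]; exact dvd_zero b
  obtain ⟨J', rfl⟩ : ∃ J', J = J' + 1 := ⟨J - 1, by omega⟩
  have hA0 : A 0 ≠ 0 := left_ne_zero_of_mul h0J
  have hAJ : A (J'+1) ≠ 0 := right_ne_zero_of_mul h0J
  obtain ⟨u, v, hv, hvid⟩ := hsum
  have hvJ' : v J' ≠ 0 := hv J' (by omega)
  -- Step 1 : the coefficient identities
  have hdne : ∀ i, i < J'+1 → ddP J' A b v i ≠ 0 := by
    intro i hi
    cases i with
    | zero =>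
        simp only [ddP]
        exact mul_ne_zero (mul_ne_zero (mul_ne_zero hb (sh_ne_zero _ hvJ')) hAJ)
          (hv 0 (by omega))
    | succ j =>
        simp only [ddP]
        exact mul_ne_zero (mul_ne_zero (mul_ne_zero (sh_ne_zero _ (hv j (by omega)))
          (sh_ne_zero _ hvJ')) hAJ) (hv (j+1) (by omega))
  have hccz : ∀ k, k < J'+1 → ccP J' A a b u v k = 0 := by
    refine coeffs_eq_zero' F (J'+1) (by omega) hord _ _ hdne 0 ?_
    intro n _ hdev
    have h0 : (b * sh 1 (v J') * A (J'+1) * v 0).eval (n:K) ≠ 0 := by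
      have := hdev 0 (by omega)
      simpa only [ddP] using this
    have hbn : b.eval (n:K) ≠ 0 := by
      simp only [eval_mul] at h0; intro h; apply h0; rw [h]; ring
    have hAJn : (A (J'+1)).eval (n:K) ≠ 0 := by
      simp only [eval_mul] at h0; intro h; apply h0; rw [h]; ring
    have hvJ'n1 : (v J').eval ((n:K)+1) ≠ 0 := by
      simp only [eval_mul, sh_eval, Int.cast_one] at h0
      intro h; apply h0; rw [h]; ring
    have hv0n : (v 0).eval (n:K) ≠ 0 := by
      simp only [eval_mul] at h0; intro h; apply h0; rw [h]; ring
    have hvn : ∀ i, i < J'+1 → (v i).eval (n:K) ≠ 0 := by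
      intro i hi
      cases i with
      | zero => exact hv0n
      | succ j =>
          have hj : (sh 1 (v j) * sh 1 (v J') * A (J'+1) * v (j+1)).eval (n:K) ≠ 0 := by
            have := hdev (j+1) hi
            simpa only [ddP] using this
          simp only [eval_mul] at hj
          intro h; apply hj; rw [h]; ring
    have hvn1 : ∀ i, i < J'+1 → (v i).eval ((n:K)+1) ≠ 0 := by
      intro i hi
      rcases eq_or_lt_of_le (Nat.lt_succ_iff.mp hi) with heq | hlt
      · rw [heq]; exact hvJ'n1
      · have hj : (sh 1 (v i) * sh 1 (v J') * A (J'+1) * v (i+1)).eval (n:K) ≠ 0 := by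
          have := hdev (i+1) (by omega)
          simpa only [ddP] using this
        simp only [eval_mul, sh_eval, Int.cast_one] at hj
        intro h; apply hj; rw [h]; ring
    have hs := hvid n hbn (fun i hi => ⟨hvn i hi, hvn1 i hi⟩)
    have hannF := hann n
    simp only [show ∀ i : ℕ, n + 1 + i = n + (i+1) from fun i => by omega] at hs
    have hcongr : ∀ i ∈ Finset.range (J'+1),
        (ccP J' A a b u v i).eval (n:K) / (ddP J' A b v i).eval (n:K) * F (n+i)
          = gam J' (a.eval (n:K) / b.eval (n:K))
              ((u J').eval ((n:K)+1) / ((v J').eval ((n:K)+1) * (A (J'+1)).eval (n:K)))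
              (fun i => (A i).eval (n:K))
              (fun i => (u i).eval ((n:K)+1) / (v i).eval ((n:K)+1))
              (fun i => (u i).eval (n:K) / (v i).eval (n:K)) i * F (n+i) := by
      intro i hi
      have hi' := Finset.mem_range.1 hi
      congr 1
      cases i with
      | zero =>
          simp only [ccP, ddP, gam, eval_mul, eval_add, eval_neg, sh_eval, Int.cast_one]
          field_simp
          ring
      | succ j =>
          have hvj := hvn1 j (by omega)
          have hvj1 := hvn (j+1) hi'
          simp only [ccP, ddP, gam, eval_mul, eval_sub, sh_eval, Int.cast_one]
          field_simp
    rw [Finset.sum_congr rfl hcongr]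
    refine gam_sum J' _ _ _ _ _ (fun k => F (n+k)) ?_ ?_ ?_
    · field_simp
    · exact hs
    · exact hannF
  have hEq0 : a * v 0 * sh 1 (v J') * A (J'+1) + u 0 * b * sh 1 (v J') * A (J'+1)
      + sh 1 (u J') * A 0 * b * v 0 = 0 := by
    have h := hccz 0 (by omega)
    simp only [ccP, neg_eq_zero] at h
    exact h
  have hEqk : ∀ k, k < J' →
      sh 1 (u k) * sh 1 (v J') * A (J'+1) * v (k+1)
        - sh 1 (u J') * A (k+1) * sh 1 (v k) * v (k+1)
        - u (k+1) * sh 1 (v k) * sh 1 (v J') * A (J'+1) = 0 := by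
    intro k hk
    have h := hccz (k+1) (by omega)
    simpa only [ccP] using h
  have hPE := PE J' A a b u v hb hAJ (fun i hi => hv i (by omega)) hEq0 hEqk
  -- Step 2 : the top certificate is nonzero
  have hP : u J' ≠ 0 := by
    intro h
    rw [h] at hPE
    simp only [sh_zero', mul_zero, zero_mul, Finset.sum_const_zero, add_zero] at hPE
    have hprod : (∏ j ∈ Finset.range (J'+2),
        (sh (1-(j:ℤ)) (v J') * sh (-(j:ℤ)) (A (J'+1)))) ≠ 0 :=
      Finset.prod_ne_zero_iff.2 fun j _ =>
        mul_ne_zero (sh_ne_zero _ hvJ') (sh_ne_zero _ hAJ)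
    rcases mul_eq_zero.1 hPE with h' | h'
    · exact hazero h'
    · exact hprod h'
  -- Step 3 : b must be a unit
  by_cases hbu : IsUnit b
  · exact hbu.dvd
  exfalso
  obtain ⟨q, hqirr, hqdvd⟩ := WfDvdMonoid.exists_irreducible_factor hbu hb
  have hq'irr : ∀ m : ℤ, Irreducible (sh m q) := fun m => sh_irreducible m hqirr
  have hq'prime : ∀ m : ℤ, Prime (sh m q) := fun m =>
    UniqueFactorizationMonoid.irreducible_iff_prime.1 (hq'irr m)
  have hpos : ∀ (f : K[X]) (m : ℤ), 0 < mQ q f m ↔ sh m q ∣ f := by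
    intro f m
    constructor
    · intro h
      refine dvd_of_multiplicity_pos ?_
      have h2 : (0:ℤ) < (multiplicity (sh m q) f : ℤ) := h
      exact_mod_cast h2
    · intro h
      have h2 := multiplicity_pos_of_dvd h
      have : (0:ℤ) < (multiplicity (sh m q) f : ℤ) := by exact_mod_cast h2
      exact this
  have hdvd_shift : ∀ (m c : ℤ) (f : K[X]), sh m q ∣ f → sh (c+m) q ∣ sh c f := by
    intro m c f h
    have h2 := sh_dvd c h
    rwa [sh_comp] at h2
  have hcop : ∀ (f g : K[X]), IsCoprime f g →
      ∀ m : ℤ, sh m q ∣ f → sh m q ∣ g → False := by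
    intro f g hfg m h1 h2
    exact (hq'irr m).not_isUnit (hfg.isUnit_of_dvd' h1 h2)
  have hgen : ∀ (f g : K[X]), (∀ h : ℕ, IsCoprime f (g.comp (X + C (h:K)))) →
      ∀ m m' : ℤ, sh m q ∣ f → sh m' q ∣ g → m' ≤ m → False := by
    intro f g hcop' m m' hmf hm'g hle
    obtain ⟨h, hh⟩ : ∃ h : ℕ, (h:ℤ) = m - m' :=
      ⟨(m - m').toNat, Int.toNat_of_nonneg (by omega)⟩
    have hd : sh ((m - m') + m') q ∣ sh (m - m') g := hdvd_shift m' (m-m') g hm'g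
    rw [show (m - m') + m' = m by ring] at hd
    have hcoef : sh (m - m') g = g.comp (X + C (h:K)) := by
      rw [sh]
      congr 2
      rw [← hh]
      push_cast
      ring
    rw [hcoef] at hd
    exact hcop f _ (hcop' h) m hmf hd
  have hgen2 : ∀ (f g : K[X]),
      (∀ h : ℕ, IsCoprime f (g.comp (X + C ((((J'+1):ℕ):K) + (h:K))))) →
      ∀ m m' : ℤ, sh m q ∣ f → sh m' q ∣ g → m' ≤ m - (J'+1) → False := by
    intro f g hcop' m m' hmf hm'g hle
    obtain ⟨h, hh⟩ : ∃ h : ℕ, (h:ℤ) = m - m' - (J'+1) :=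
      ⟨(m - m' - (J'+1)).toNat, Int.toNat_of_nonneg (by omega)⟩
    have hd : sh ((m - m') + m') q ∣ sh (m - m') g := hdvd_shift m' (m-m') g hm'g
    rw [show (m - m') + m' = m by ring] at hd
    have hcoef : sh (m - m') g = g.comp (X + C ((((J'+1):ℕ):K) + (h:K))) := by
      rw [sh]
      congr 2
      rw [show m - m' = ((J'+1):ℤ) + h by omega]
      push_cast
      ring
    rw [hcoef] at hd
    exact hcop f _ (hcop' h) m hmf hd
  -- support bounds
  obtain ⟨Na, hNa⟩ := exists_nat_bound (finite_shift_dvd hqirr hazero)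
  obtain ⟨Nb, hNb⟩ := exists_nat_bound (finite_shift_dvd hqirr hb)
  obtain ⟨NP, hNP⟩ := exists_nat_bound (finite_shift_dvd hqirr hP)
  obtain ⟨NQ, hNQ⟩ := exists_nat_bound (finite_shift_dvd hqirr hvJ')
  obtain ⟨N0, hN0⟩ := exists_nat_bound (finite_shift_dvd hqirr hA0)
  obtain ⟨NJ, hNJ⟩ := exists_nat_bound (finite_shift_dvd hqirr hAJ)
  set N : ℕ := Na + Nb + NP + NQ + N0 + NJ with hNdef
  have hN : ∀ m : ℤ, (N:ℤ) < |m| →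
      mQ q b m = 0 ∧ mQ q (v J') m = 0 ∧ mQ q (u J') m = 0 ∧
        mQ q (A 0) m = 0 ∧ mQ q (A (J'+1)) m = 0 := by
    intro m hm
    have hb' : (Nb:ℤ) < |m| := by rw [hNdef] at hm; push_cast at hm ⊢; omega
    have hQ' : (NQ:ℤ) < |m| := by rw [hNdef] at hm; push_cast at hm ⊢; omega
    have hP' : (NP:ℤ) < |m| := by rw [hNdef] at hm; push_cast at hm ⊢; omega
    have h0' : (N0:ℤ) < |m| := by rw [hNdef] at hm; push_cast at hm ⊢; omega
    have hJ'' : (NJ:ℤ) < |m| := by rw [hNdef] at hm; push_cast at hm ⊢; omega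
    refine ⟨?_, ?_, ?_, ?_, ?_⟩ <;>
      simp only [mQ, Int.natCast_eq_zero] <;>
      rw [multiplicity_eq_zero]
    · exact hNb m hb'
    · exact hNQ m hQ'
    · exact hNP m hP'
    · exact hN0 m h0'
    · exact hNJ m hJ''
  -- the index set
  set sA : Finset ℕ := (Finset.range (J'+2)).filter (fun i => A i ≠ 0) with hsA
  have h0sA : 0 ∈ sA := Finset.mem_filter.2 ⟨Finset.mem_range.2 (by omega), hA0⟩
  have hJsA : J'+1 ∈ sA := Finset.mem_filter.2 ⟨Finset.mem_range.2 (by omega), hAJ⟩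
  have hsubA : ∀ i ∈ sA, i ≤ J'+1 := fun i hi => by
    have := Finset.mem_range.1 (Finset.mem_filter.1 hi).1; omega
  have hAne : ∀ i ∈ sA, A i ≠ 0 := fun i hi => (Finset.mem_filter.1 hi).2
  -- the terms
  set T : ℕ → K[X] := fun j => if j = J'+1+1
      then a * ∏ j' ∈ Finset.range (J'+2), (sh (1-(j':ℤ)) (v J') * sh (-(j':ℤ)) (A (J'+1)))
      else b * sh (1-(j:ℤ)) (u J') * sh (-(j:ℤ)) (A j) *
        ∏ j' ∈ (Finset.range (J'+2)).erase j,
          (sh (1-(j':ℤ)) (v J') * sh (-(j':ℤ)) (A (J'+1))) with hT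
  have hprodne : ∀ (s : Finset ℕ), (∏ j' ∈ s,
      (sh (1-(j':ℤ)) (v J') * sh (-(j':ℤ)) (A (J'+1))) : K[X]) ≠ 0 := fun s =>
    Finset.prod_ne_zero_iff.2 fun j _ => mul_ne_zero (sh_ne_zero _ hvJ') (sh_ne_zero _ hAJ)
  have hTne : ∀ j ∈ insert (J'+1+1) sA, T j ≠ 0 := by
    intro j hj
    rcases Finset.mem_insert.1 hj with rfl | hjs
    · rw [hT]
      simp only [eq_self_iff_true, if_true]
      exact mul_ne_zero hazero (hprodne _)
    · have hjne : j ≠ J'+1+1 := by have := hsubA j hjs; omega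
      rw [hT]
      simp only [if_neg hjne]
      exact mul_ne_zero (mul_ne_zero (mul_ne_zero hb (sh_ne_zero _ hP))
        (sh_ne_zero _ (hAne j hjs))) (hprodne _)
  have hTsum : ∑ j ∈ insert (J'+1+1) sA, T j = 0 := by
    rw [Finset.sum_insert (by
      intro hmem
      have := hsubA _ hmem; omega)]
    have h1 : T (J'+1+1) = a * ∏ j' ∈ Finset.range (J'+2),
        (sh (1-(j':ℤ)) (v J') * sh (-(j':ℤ)) (A (J'+1))) := by
      rw [hT]; simp only [eq_self_iff_true, if_true]
    have h2 : ∀ j ∈ sA, T j = b * sh (1-(j:ℤ)) (u J') * sh (-(j:ℤ)) (A j) *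
        ∏ j' ∈ (Finset.range (J'+2)).erase j,
          (sh (1-(j':ℤ)) (v J') * sh (-(j':ℤ)) (A (J'+1))) := by
      intro j hjs
      have hjne : j ≠ J'+1+1 := by have := hsubA j hjs; omega
      rw [hT]; simp only [if_neg hjne]
    rw [h1, Finset.sum_congr rfl h2]
    have h3 : ∑ j ∈ sA, (b * sh (1-(j:ℤ)) (u J') * sh (-(j:ℤ)) (A j) *
        ∏ j' ∈ (Finset.range (J'+2)).erase j,
          (sh (1-(j':ℤ)) (v J') * sh (-(j':ℤ)) (A (J'+1))))
        = ∑ j ∈ Finset.range (J'+2), (b * sh (1-(j:ℤ)) (u J') * sh (-(j:ℤ)) (A j) *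
        ∏ j' ∈ (Finset.range (J'+2)).erase j,
          (sh (1-(j':ℤ)) (v J') * sh (-(j':ℤ)) (A (J'+1)))) := by
      rw [hsA]
      refine Finset.sum_filter_of_ne ?_
      intro x hx hne hAx
      apply hne
      rw [hAx, sh_zero', mul_zero, zero_mul]
    rw [h3]
    exact hPE
  -- the valuation comparison function
  set Vf : ℕ → ℤ → ℤ := fun j m => if j = J'+1+1 then mQ q a m - mQ q b m
      else mQ q (u J') (m-1+j) - mQ q (v J') (m-1+j) + mQ q (A j) (m+j)
        - mQ q (A (J'+1)) (m+j) with hVf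
  have hexp : ∀ m : ℤ, ∀ j ∈ insert (J'+1+1) sA, (multiplicity (sh m q) (T j) : ℤ)
      = (mQ q b m + ∑ j' ∈ Finset.range (J'+2),
          (mQ q (v J') (m-1+j') + mQ q (A (J'+1)) (m+j'))) + Vf j m := by
    intro m j hj
    rcases Finset.mem_insert.1 hj with rfl | hjs
    · rw [hT, hVf]
      simp only [eq_self_iff_true, if_true]
      rw [mQ_tR q hqirr (J'+2) a (v J') (A (J'+1)) hazero hvJ' hAJ m]
      ring
    · have hjne : j ≠ J'+1+1 := by have := hsubA j hjs; omega
      rw [hT, hVf]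
      simp only [if_neg hjne]
      rw [mQ_t q hqirr (J'+2) b (u J') (A j) (v J') (A (J'+1)) hb hP (hAne j hjs) hvJ' hAJ j
        (Finset.mem_range.2 (by have := hsubA j hjs; omega)) m]
      ring
  have hMT : ∀ m : ℤ, ∀ j₀ ∈ insert (J'+1+1) sA,
      ∃ j ∈ insert (J'+1+1) sA, j ≠ j₀ ∧ Vf j m ≤ Vf j₀ m := by
    intro m j₀ hj₀
    have hne_er : ((insert (J'+1+1) sA).erase j₀).Nonempty := by
      by_cases hc : j₀ = J'+1+1
      · exact ⟨0, Finset.mem_erase.2 ⟨by omega, Finset.mem_insert_of_mem h0sA⟩⟩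
      · exact ⟨J'+1+1, Finset.mem_erase.2 ⟨fun h => hc h.symm, Finset.mem_insert_self _ _⟩⟩
    obtain ⟨j, hj, hjne, hle⟩ :=
      exists_other_mult_le (hq'prime m) _ T hTne hTsum hj₀ hne_er
    refine ⟨j, hj, hjne, ?_⟩
    have e1 := hexp m j hj
    have e2 := hexp m j₀ hj₀
    have hle' : (multiplicity (sh m q) (T j) : ℤ)
        ≤ (multiplicity (sh m q) (T j₀) : ℤ) := by exact_mod_cast hle
    omega
  -- the root-location hypotheses
  have H1 : ∀ m m' : ℤ, 0 < mQ q (A 0) m → 0 < mQ q (A (J'+1)) m' → m < m' := by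
    intro m m' h h'
    by_contra hc
    push_neg at hc
    exact hgen (A 0) (A (J'+1)) hc1 m m' ((hpos _ _).1 h) ((hpos _ _).1 h') hc
  have H4 : ∀ m m' : ℤ, 0 < mQ q b m → 0 < mQ q (A (J'+1)) m' → m < m' := by
    intro m m' h h'
    by_contra hc
    push_neg at hc
    exact hgen b (A (J'+1)) hc4 m m' ((hpos _ _).1 h) ((hpos _ _).1 h') hc
  have H2 : ∀ m m' : ℤ, 0 < mQ q b m → 0 < mQ q b m' → m' - m ≤ (((J'+1):ℕ):ℤ) - 1 := by
    intro m m' h h'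
    by_contra hc
    push_neg at hc
    refine hgen2 b b hc2 m' m ((hpos _ _).1 h') ((hpos _ _).1 h) (by push_cast at hc ⊢; omega)
  have H3 : ∀ m m' : ℤ, 0 < mQ q (A 0) m → 0 < mQ q b m' → m - (((J'+1):ℕ):ℤ) + 1 ≤ m' := by
    intro m m' h h'
    by_contra hc
    push_neg at hc
    refine hgen2 (A 0) b hc3 m m' ((hpos _ _).1 h) ((hpos _ _).1 h') (by push_cast at hc ⊢; omega)
  have hco : ∀ m : ℤ, 0 < mQ q b m → mQ q a m = 0 := by
    intro m hm
    by_contra hc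
    have hpos' : 0 < mQ q a m := lt_of_le_of_ne (mQ_nonneg q a m) (Ne.symm hc)
    exact hcop a b hab m ((hpos _ _).1 hpos') ((hpos _ _).1 hm)
  have h00 : 0 < mQ q b 0 := by
    rw [hpos]
    rw [sh_zero]
    exact hqdvd
  exact core (J'+1) (by omega) sA h0sA hJsA hsubA
    (mQ q a) (mQ q b) (mQ q (v J')) (mQ q (u J')) (fun i => mQ q (A i))
    (fun m => mQ_nonneg q a m) (fun m => mQ_nonneg q b m) (fun m => mQ_nonneg q (v J') m)
    (fun m => mQ_nonneg q (u J') m) (fun i m => mQ_nonneg q (A i) m)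
    Vf
    (fun m => by rw [hVf]; simp only [eq_self_iff_true, if_true])
    (fun i his m => by
      have hine : i ≠ J'+1+1 := by have := hsubA i his; omega
      rw [hVf]; simp only [if_neg hine])
    N hN hMT hco H1 H2 H3 H4 h00
end
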